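/- Let m ≥ 1 and n_c ≥ 5 be integers and suppose θ ∈ ℝ^{m(n_c−1)+1} satisfies conditions (C1)–(C2) with integer vector k = (k_0, ..., k_{m−1}). Then for every p ∈ {0, ..., m−1}, the winding number of θ along the p-th basis cycle σ_p of the 1D honeycomb graph G(m, n_c) equals k_p. In particular the winding vector of θ is exactly (k_0, ..., k_{m−1}). -/

import Mathlib

/-- The counterclockwise difference: the unique element of `[-π, π)` congruent to `x`
modulo `2π`. -/
noncomputable def dcc (x : ℝ) : ℝ :=
  x - 2 * Real.pi * ((⌊(x + Real.pi) / (2 * Real.pi)⌋ : ℤ) : ℝ)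

/-- Conditions (C1)–(C2). -/
def satisfiesC (m nc : ℕ) (θ : ℕ → ℝ) (k : ℕ → ℤ) : Prop :=
  (∀ p, p < m → |k p| ≤ ⌈(nc : ℚ) / 4⌉ - 1) ∧
  (∀ p, p < m → ∀ i, p * (nc - 1) + 1 ≤ i → i ≤ (p + 1) * (nc - 1) →
    θ (i + 1) - θ i = 2 * Real.pi * (k p : ℝ) / (nc : ℝ))

/-- The winding number of `θ` along the `p`-th basis cycle of the 1D honeycomb graph:
the cycle visits `p(n_c-1)+1, ..., (p+1)(n_c-1)+1` along path edges and returns along the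
chord edge. -/
noncomputable def windingP (nc : ℕ) (θ : ℕ → ℝ) (p : ℕ) : ℝ :=
  (1 / (2 * Real.pi)) *
    ((∑ j ∈ Finset.range (nc - 1),
        dcc (θ (p * (nc - 1) + 1 + j + 1) - θ (p * (nc - 1) + 1 + j))) +
      dcc (θ (p * (nc - 1) + 1) - θ ((p + 1) * (nc - 1) + 1)))

lemma dcc_eq_of (x y : ℝ) (q : ℤ) (h : x = y + 2 * Real.pi * q)
    (h1 : -Real.pi ≤ y) (h2 : y < Real.pi) : dcc x = y := by
  have hpi := Real.pi_pos
  have h2pi : (0:ℝ) < 2 * Real.pi := by linarith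
  have hfloor : ⌊(x + Real.pi) / (2 * Real.pi)⌋ = q := by
    have hx : (x + Real.pi) / (2 * Real.pi) = (y + Real.pi) / (2 * Real.pi) + q := by
      field_simp [h]; rw [h]; ring
    rw [hx, Int.floor_add_intCast]
    have h0 : ⌊(y + Real.pi) / (2 * Real.pi)⌋ = 0 := by
      apply Int.floor_eq_zero_iff.2
      constructor
      · exact div_nonneg (by linarith) (le_of_lt h2pi)
      · rw [div_lt_one h2pi]; linarith
    rw [h0, zero_add]
  simp only [dcc]
  rw [hfloor, h]
  ring

/-- if `θ` satisfies (C1)–(C2) with integer vector `k`, then for every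
`p < m` the winding number of `θ` along the `p`-th basis cycle equals `k_p`; in
particular the winding vector of `θ` is exactly `(k_0, ..., k_{m-1})`. -/
theorem winding_vector_of_satisfiesC (m nc : ℕ) (hm : 1 ≤ m) (hnc : 5 ≤ nc)
    (θ : ℕ → ℝ) (k : ℕ → ℤ) (hC : satisfiesC m nc θ k) :
    ∀ p, p < m → windingP nc θ p = (k p : ℝ) := by
  obtain ⟨hk, hθ⟩ := hC
  intro p hp
  have hpi := Real.pi_pos
  have hncR : (5:ℝ) ≤ (nc:ℝ) := by exact_mod_cast hnc
  have hnc0 : (0:ℝ) < (nc:ℝ) := by linarith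
  -- integer bound: 4 |k p| < nc
  have hkZ : 4 * |k p| < (nc : ℤ) := by
    have h1 := hk p hp
    have h2 : ((⌈(nc : ℚ) / 4⌉ : ℚ)) < (nc : ℚ) / 4 + 1 := Int.ceil_lt_add_one _
    have h3 : (|k p| : ℚ) ≤ (⌈(nc : ℚ) / 4⌉ : ℚ) - 1 := by exact_mod_cast h1
    have : (4 : ℚ) * (|k p| : ℚ) < (nc : ℚ) := by linarith
    exact_mod_cast this
  have hkR : 4 * |(k p : ℝ)| < (nc : ℝ) := by exact_mod_cast hkZ
  have hkabs := abs_lt.1 (show |(k p : ℝ)| < (nc : ℝ)/4 by linarith)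
  set c : ℝ := 2 * Real.pi * (k p : ℝ) / (nc : ℝ) with hc
  have hc1 : -Real.pi ≤ c := by
    rw [hc, le_div_iff₀ hnc0]
    nlinarith [hkabs.1, hkabs.2]
  have hc2 : c < Real.pi := by
    rw [hc, div_lt_iff₀ hnc0]
    nlinarith [hkabs.1, hkabs.2]
  have hedge : ∀ j, j < nc - 1 →
      θ (p * (nc - 1) + 1 + j + 1) - θ (p * (nc - 1) + 1 + j) = c := by
    intro j hj
    apply hθ p hp
    · omega
    · have h5 : (p + 1) * (nc - 1) = p * (nc - 1) + (nc - 1) := by ring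
      omega
  -- the sum of dcc along path edges
  have hsum : (∑ j ∈ Finset.range (nc - 1),
      dcc (θ (p * (nc - 1) + 1 + j + 1) - θ (p * (nc - 1) + 1 + j)))
      = ((nc : ℝ) - 1) * c := by
    have heach : ∀ j ∈ Finset.range (nc - 1),
        dcc (θ (p * (nc - 1) + 1 + j + 1) - θ (p * (nc - 1) + 1 + j)) = c := by
      intro j hj
      rw [hedge j (Finset.mem_range.1 hj)]
      exact dcc_eq_of c c 0 (by push_cast; ring) hc1 hc2
    rw [Finset.sum_congr rfl heach, Finset.sum_const, Finset.card_range, nsmul_eq_mul]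
    have : ((nc - 1 : ℕ) : ℝ) = (nc : ℝ) - 1 := by
      have : 1 ≤ nc := by omega
      push_cast [this]; ring
    rw [this]
  -- telescoping: θ at end minus θ at start
  have htel : θ ((p + 1) * (nc - 1) + 1) - θ (p * (nc - 1) + 1) = ((nc : ℝ) - 1) * c := by
    have h5 : (p + 1) * (nc - 1) + 1 = p * (nc - 1) + 1 + (nc - 1) := by ring
    rw [h5]
    have := Finset.sum_range_sub (fun j => θ (p * (nc - 1) + 1 + j)) (nc - 1)
    simp only [Nat.add_zero] at this
    rw [← this]
    rw [Finset.sum_congr rfl (fun j hj => by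
      have hj' := Finset.mem_range.1 hj
      have harg : p * (nc - 1) + 1 + (j + 1) = p * (nc - 1) + 1 + j + 1 := by omega
      rw [harg, hedge j hj'])]
    rw [Finset.sum_const, Finset.card_range, nsmul_eq_mul]
    congr 1
    have : 1 ≤ nc := by omega
    push_cast [this]; ring
  have hncc : (nc : ℝ) * c = 2 * Real.pi * (k p : ℝ) := by
    rw [hc]; field_simp
  have hchord : dcc (θ (p * (nc - 1) + 1) - θ ((p + 1) * (nc - 1) + 1)) = c := by
    apply dcc_eq_of _ c (-(k p))
    · have : θ (p * (nc - 1) + 1) - θ ((p + 1) * (nc - 1) + 1) = -(((nc : ℝ) - 1) * c) := by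
        linarith [htel]
      rw [this]
      push_cast
      nlinarith [hncc]
    · exact hc1
    · exact hc2
  rw [windingP, hsum, hchord]
  have hpi2 : (2 * Real.pi) ≠ 0 := by positivity
  field_simp
  nlinarith [hncc]
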